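/- Let G be a 2-connected graph and let x and y be distinct vertices of G. If the independence number of G - {x,y} is at most 2, then every xy-fiber contains every vertex of G of maximum degree, or G - {x,y} is the disjoint union of two complete graphs. -/

import Mathlib

open SimpleGraph

namespace GallaiFormal

variable {V : Type}

/-- A vertex `v` is a *Gallai vertex* of `G` if every longest path of `G` contains `v`. -/
def IsGallaiVertex (G : SimpleGraph V) (v : V) : Prop :=
  ∀ ⦃a b : V⦄ (p : G.Walk a b), p.IsPath →
    (∀ ⦃c d : V⦄ (q : G.Walk c d), q.IsPath → q.length ≤ p.length) → v ∈ p.support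

/-- `G` has no induced subgraph isomorphic to `H` (`G` is `H`-free). -/
def IsFree {W : Type} (G : SimpleGraph V) (H : SimpleGraph W) : Prop :=
  ¬ ∃ s : Set V, Nonempty (H ≃g (G.induce s))

/-- `A` is an independent set of `G`. -/
def IsIndepSet (G : SimpleGraph V) (A : Set V) : Prop :=
  A.Pairwise fun a b => ¬ G.Adj a b

/-- `H` is (the vertex set of) a connected component of `G - s`. -/
def IsCompOutside (G : SimpleGraph V) (s : Set V) (H : Set V) : Prop :=
  H.Nonempty ∧ Disjoint H s ∧ (G.induce H).Connected ∧
    ∀ u ∈ H, ∀ v : V, G.Adj u v → v ∉ s → v ∈ H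

/-- The set of attachment points of `H` on the path `p`. -/
def attachSet (G : SimpleGraph V) {x y : V} (p : G.Walk x y) (H : Set V) : Set V :=
  {w | w ∈ p.support ∧ ∃ u ∈ H, G.Adj u w}

/-- `p` is an `x`-fiber: a longest path among paths having its first endpoint as an endpoint. -/
def IsEndFiber (G : SimpleGraph V) {x y : V} (p : G.Walk x y) : Prop :=
  p.IsPath ∧ ∀ (z : V) (q : G.Walk x z), q.IsPath → q.length ≤ p.length

/-- `p` is an `xy`-fiber: a longest path among paths with the same two endpoints. -/
def IsFiberBetween (G : SimpleGraph V) {x y : V} (p : G.Walk x y) : Prop :=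
  p.IsPath ∧ ∀ q : G.Walk x y, q.IsPath → q.length ≤ p.length

/-- `p` is a longest path of `G`. -/
def IsLongestPath (G : SimpleGraph V) {x y : V} (p : G.Walk x y) : Prop :=
  p.IsPath ∧ ∀ ⦃a b : V⦄ (q : G.Walk a b), q.IsPath → q.length ≤ p.length

/-- The (index) interval `[a, b]` of positions on `p` is a maximal interval avoiding `S`;
these intervals correspond to the components of `P - S`. -/
def IsGapInterval (G : SimpleGraph V) {x y : V} (p : G.Walk x y) (S : Set V) (a b : ℕ) : Prop :=
  a ≤ b ∧ b ≤ p.length ∧ (∀ i, a ≤ i → i ≤ b → p.getVert i ∉ S) ∧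
    (a = 0 ∨ p.getVert (a - 1) ∈ S) ∧ (b = p.length ∨ p.getVert (b + 1) ∈ S)

/-- The rank of the vertex at position `j` on `p` (w.r.t. the attachment set `S`): the maximum
length of a subpath of `p` ending at position `j` and avoiding `S`. -/
noncomputable def rankAt (G : SimpleGraph V) {x y : V} (p : G.Walk x y) (S : Set V) (j : ℕ) : ℕ :=
  sSup {r : ℕ | ∃ a : ℕ, a + r = j ∧ ∀ i, a ≤ i → i ≤ j → p.getVert i ∉ S}

/-- `G` is `k`-connected. -/
def IsKConnected [Fintype V] (k : ℕ) (G : SimpleGraph V) : Prop :=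
  k < Fintype.card V ∧ ∀ s : Set V, s.ncard < k → (G.induce sᶜ).Connected

/-- `B` is (the vertex set of) a block of `G`: a maximal connected subgraph without cut-vertices. -/
def IsBlock (G : SimpleGraph V) (B : Set V) : Prop :=
  (G.induce B).Connected ∧ (∀ v ∈ B, (G.induce (B \ {v})).Preconnected) ∧
    ∀ B' : Set V, B ⊆ B' → (G.induce B').Connected →
      (∀ v ∈ B', (G.induce (B' \ {v})).Preconnected) → B' = B

/-- `B` is a special block of `G`: a block such that every longest path contains an edge of `B`. -/
def IsSpecialBlock (G : SimpleGraph V) (B : Set V) : Prop :=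
  IsBlock G B ∧ ∀ ⦃a b : V⦄ (p : G.Walk a b), IsLongestPath G p →
    ∃ i < p.length, p.getVert i ∈ B ∧ p.getVert (i + 1) ∈ B

set_option linter.unusedSectionVars false
set_option linter.unusedVariables false

/-- Build a walk from a vertex function with adjacent consecutive values. -/
def walkOfFn (G : SimpleGraph V) (f : ℕ → V) :
    (n : ℕ) → (∀ i, i < n → G.Adj (f i) (f (i+1))) → G.Walk (f 0) (f n)
  | 0, _ => .nil
  | (n+1), h => Walk.concat (walkOfFn G f n (fun i hi => h i (Nat.lt_succ_of_lt hi)))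
      (h n (Nat.lt_succ_self n))

lemma walkOfFn_length (G : SimpleGraph V) (f : ℕ → V) (n : ℕ) (h) :
    (walkOfFn G f n h).length = n := by
  induction n with
  | zero => rfl
  | succ n ih => simp [walkOfFn, Walk.length_concat, ih]

lemma walkOfFn_support (G : SimpleGraph V) (f : ℕ → V) (n : ℕ) (h) :
    (walkOfFn G f n h).support = (List.range (n+1)).map f := by
  induction n with
  | zero => rfl
  | succ n ih =>
    rw [walkOfFn, Walk.support_concat, ih, List.range_succ (n := n+1), List.map_append]
    simp

lemma walkOfFn_isPath (G : SimpleGraph V) (f : ℕ → V) (n : ℕ) (h)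
    (hinj : ∀ i ≤ n, ∀ j ≤ n, f i = f j → i = j) : (walkOfFn G f n h).IsPath := by
  rw [Walk.isPath_def, walkOfFn_support]
  refine List.Nodup.map_on ?_ List.nodup_range
  intro i hi j hj hij
  exact hinj i (by simpa using Nat.lt_succ_iff.mp (List.mem_range.mp hi))
    j (by simpa using Nat.lt_succ_iff.mp (List.mem_range.mp hj)) hij

/-- Key tool: any injective adjacent-consecutive vertex function from `x` to `y`
gives a lower bound on the length of an `xy`-fiber. -/
lemma fiber_bound {G : SimpleGraph V} {x y : V} {p : G.Walk x y}
    (hp : p.IsPath ∧ ∀ q : G.Walk x y, q.IsPath → q.length ≤ p.length)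
    (f : ℕ → V) (N : ℕ) (h0 : f 0 = x) (hN : f N = y)
    (hadj : ∀ i, i < N → G.Adj (f i) (f (i+1)))
    (hinj : ∀ i ≤ N, ∀ j ≤ N, f i = f j → i = j) : N ≤ p.length := by
  have hq := hp.2 ((walkOfFn G f N hadj).copy h0 hN) (by
    rw [Walk.isPath_copy]; exact walkOfFn_isPath G f N hadj hinj)
  rwa [Walk.length_copy, walkOfFn_length] at hq

lemma support_eq_map_getVert {G : SimpleGraph V} {x y : V} (p : G.Walk x y) :
    p.support = (List.range (p.length+1)).map p.getVert := by
  induction p with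
  | nil => rfl
  | @cons u v w h q ih =>
    rw [Walk.support_cons, ih, Walk.length_cons, List.range_succ_eq_map (n := q.length + 1),
      List.map_cons, List.map_map]
    simp only [Walk.getVert_zero]
    refine congrArg₂ _ rfl ?_
    refine (List.map_congr_left ?_).symm
    intro i _
    simp [Function.comp, Walk.getVert_cons_succ]

lemma getVert_injOn {G : SimpleGraph V} {x y : V} {p : G.Walk x y} (hp : p.IsPath) :
    ∀ i ≤ p.length, ∀ j ≤ p.length, p.getVert i = p.getVert j → i = j := by
  intro i hi j hj hij
  have h := (Walk.isPath_def _).mp hp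
  rw [support_eq_map_getVert] at h
  exact List.inj_on_of_nodup_map h (List.mem_range.mpr (by omega))
    (List.mem_range.mpr (by omega)) hij

/-- Vertices reachable from `z` by walks avoiding the set `P`. -/
def comp (G : SimpleGraph V) (P : Set V) (z : V) : Set V :=
  {u | ∃ w : G.Walk z u, ∀ t ∈ w.support, t ∉ P}

lemma comp_self {G : SimpleGraph V} {P : Set V} {z : V} (hz : z ∉ P) : z ∈ comp G P z :=
  ⟨.nil, by simpa using hz⟩

lemma comp_not_mem {G : SimpleGraph V} {P : Set V} {z u : V} (hu : u ∈ comp G P z) : u ∉ P := by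
  obtain ⟨w, hw⟩ := hu
  exact hw u w.end_mem_support

lemma comp_closure {G : SimpleGraph V} {P : Set V} {z u t : V} (hu : u ∈ comp G P z)
    (ha : G.Adj u t) (ht : t ∉ P) : t ∈ comp G P z := by
  obtain ⟨w, hw⟩ := hu
  refine ⟨w.concat ha, ?_⟩
  intro s hs
  rw [Walk.support_concat, List.mem_append] at hs
  rcases hs with hs | hs
  · exact hw s hs
  · simp only [List.mem_singleton] at hs; subst hs; exact ht

lemma comp_symm_trans {G : SimpleGraph V} {P : Set V} {z u t : V} (hu : u ∈ comp G P z)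
    (ht : t ∈ comp G P z) : t ∈ comp G P u := by
  obtain ⟨w, hw⟩ := hu
  obtain ⟨w', hw'⟩ := ht
  refine ⟨w.reverse.append w', ?_⟩
  intro s hs
  rw [Walk.mem_support_append_iff, Walk.support_reverse, List.mem_reverse] at hs
  rcases hs with hs | hs
  · exact hw s hs
  · exact hw' s hs

lemma comp_trans {G : SimpleGraph V} {P : Set V} {z u t : V} (hu : u ∈ comp G P z)
    (ht : t ∈ comp G P u) : t ∈ comp G P z := by
  obtain ⟨w, hw⟩ := hu
  obtain ⟨w', hw'⟩ := ht
  refine ⟨w.append w', ?_⟩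
  intro s hs
  rw [Walk.mem_support_append_iff] at hs
  rcases hs with hs | hs
  · exact hw s hs
  · exact hw' s hs

lemma comp_path {G : SimpleGraph V} {P : Set V} {z u t : V} (hu : u ∈ comp G P z)
    (ht : t ∈ comp G P z) :
    ∃ r : G.Walk u t, r.IsPath ∧ ∀ s ∈ r.support, s ∉ P := by
  haveI := Classical.decEq V
  obtain ⟨w, hw⟩ := comp_symm_trans hu ht
  exact ⟨w.toPath, (w.toPath).2, fun s hs => hw s (Walk.support_toPath_subset w hs)⟩

/-- From 2-connectivity: a walk between any two vertices avoiding any third vertex. -/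
lemma avoid {G : SimpleGraph V} [Fintype V]
    (h2 : ∀ s : Set V, s.ncard < 2 → (G.induce sᶜ).Connected)
    (w a b : V) (ha : a ≠ w) (hb : b ≠ w) :
    ∃ q : G.Walk a b, ∀ t ∈ q.support, t ≠ w := by
  have h := h2 {w} (by simp)
  have hr := h.preconnected ⟨a, by simp [ha]⟩ ⟨b, by simp [hb]⟩
  obtain ⟨q⟩ := hr
  classical
  let φ : G.induce ({w}ᶜ : Set V) →g G := ⟨Subtype.val, fun h => h⟩
  refine ⟨(q.map φ).copy rfl rfl, ?_⟩
  intro t ht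
  rw [Walk.support_copy, Walk.support_map, List.mem_map] at ht
  obtain ⟨⟨s, hs⟩, _, rfl⟩ := ht
  exact hs

lemma exists_cross {G : SimpleGraph V} {H : Set V} :
    ∀ {a b : V} (q : G.Walk a b), a ∈ H → b ∉ H →
      ∃ u t, G.Adj u t ∧ u ∈ H ∧ t ∉ H ∧ u ∈ q.support ∧ t ∈ q.support := by
  intro a b q
  induction q with
  | nil => intro h1 h2; exact absurd h1 h2
  | @cons a c b hadj q ih =>
    intro h1 h2
    by_cases hc : c ∈ H
    · obtain ⟨u, t, h3, h4, h5, h6, h7⟩ := ih hc h2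
      exact ⟨u, t, h3, h4, h5, by simp [h6], by simp [h7]⟩
    · exact ⟨a, c, hadj, h1, hc, by simp, by simp⟩

lemma indep3 {G : SimpleGraph V} {x y : V}
    (halpha : ∀ A : Set V, x ∉ A → y ∉ A → IsIndepSet G A → A.ncard ≤ 2)
    {u1 u2 u3 : V}
    (h12 : u1 ≠ u2) (h13 : u1 ≠ u3) (h23 : u2 ≠ u3)
    (n12 : ¬ G.Adj u1 u2) (n13 : ¬ G.Adj u1 u3) (n23 : ¬ G.Adj u2 u3)
    (hx1 : x ≠ u1) (hx2 : x ≠ u2) (hx3 : x ≠ u3)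
    (hy1 : y ≠ u1) (hy2 : y ≠ u2) (hy3 : y ≠ u3) : False := by
  have h := halpha {u1, u2, u3} (by simp [hx1, hx2, hx3]) (by simp [hy1, hy2, hy3]) ?_
  · rw [Set.ncard_insert_of_notMem (by simp [h12, h13]) (Set.toFinite _),
      Set.ncard_pair h23] at h
    omega
  · intro a ha b hb hne
    simp only [Set.mem_insert_iff, Set.mem_singleton_iff] at ha hb
    rcases ha with rfl | rfl | rfl <;> rcases hb with rfl | rfl | rfl <;>
      first
        | exact absurd rfl hne
        | exact n12 | exact n13 | exact n23
        | exact fun h => n12 h.symm | exact fun h => n13 h.symm | exact fun h => n23 h.symm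

lemma clique_ham {G : SimpleGraph V} [Fintype V] :
    ∀ (n : ℕ) (S : Set V), S.ncard = n + 2 →
      (∀ a ∈ S, ∀ b ∈ S, a ≠ b → G.Adj a b) →
      ∀ a b, a ∈ S → b ∈ S → a ≠ b →
      ∃ r : G.Walk a b, r.IsPath ∧ (∀ t, t ∈ r.support ↔ t ∈ S) ∧ r.length + 1 = n + 2 := by
  intro n
  induction n with
  | zero =>
    intro S hS hcl a b haS hbS hab
    have hSab : S = {a, b} := by
      refine (Set.eq_of_subset_of_ncard_le (by
        intro t ht
        simp only [Set.mem_insert_iff, Set.mem_singleton_iff] at ht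
        rcases ht with rfl | rfl <;> assumption) ?_ (Set.toFinite _)).symm
      rw [hS, Set.ncard_pair hab]
    refine ⟨Walk.cons (hcl a haS b hbS hab) .nil, ?_, ?_, by simp⟩
    · simp [Walk.isPath_def, hab]
    · intro t
      simp [hSab]
  | succ n ih =>
    intro S hS hcl a b haS hbS hab
    have hne : (S \ {a, b}).Nonempty := by
      rw [Set.nonempty_iff_ne_empty]
      intro hemp
      have hsub : S ⊆ {a, b} := by
        intro t ht
        by_contra htab
        exact (Set.eq_empty_iff_forall_notMem.mp hemp t) ⟨ht, htab⟩
      have := Set.ncard_le_ncard hsub (Set.toFinite _)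
      have h2 : ({a, b} : Set V).ncard ≤ 2 := by
        rw [Set.ncard_pair hab]
      omega
    obtain ⟨c, hcS, hcab⟩ := hne
    simp only [Set.mem_insert_iff, Set.mem_singleton_iff, not_or] at hcab
    obtain ⟨hca, hcb⟩ := hcab
    obtain ⟨r', hr'path, hr'supp, hr'len⟩ := ih (S \ {a})
      (by rw [Set.ncard_diff_singleton_of_mem haS, hS]; omega)
      (fun a' ha' b' hb' hne => hcl a' ha'.1 b' hb'.1 hne)
      c b ⟨hcS, hca⟩ ⟨hbS, fun h => hab h.symm⟩ hcb
    refine ⟨Walk.cons (hcl a haS c hcS (fun h => hca h.symm)) r', ?_, ?_, by simp [hr'len]⟩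
    · rw [Walk.cons_isPath_iff]
      exact ⟨hr'path, fun h => ((hr'supp a).mp h).2 rfl⟩
    · intro t
      rw [Walk.support_cons, List.mem_cons, hr'supp]
      constructor
      · rintro (rfl | ht)
        · exact haS
        · exact ht.1
      · intro ht
        by_cases hta : t = a
        · exact Or.inl hta
        · exact Or.inr ⟨ht, hta⟩

section Fiber

variable {G : SimpleGraph V} {x y : V} {p : G.Walk x y}

/-- vertices of the path as a set -/
def pSet (p : G.Walk x y) : Set V := {t | t ∈ p.support}

lemma getVert_mem_pSet (p : G.Walk x y) {i : ℕ} (hi : i ≤ p.length) : p.getVert i ∈ pSet p :=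
  Walk.mem_support_iff_exists_getVert.mpr ⟨i, rfl, hi⟩

/-- If two consecutive vertices of a fiber both have neighbours connected by a path
avoiding the fiber, the fiber was not longest. -/
lemma no_consec (hp : p.IsPath ∧ ∀ q : G.Walk x y, q.IsPath → q.length ≤ p.length)
    {i : ℕ} (hi : i + 1 ≤ p.length)
    {wi wj : V} (r : G.Walk wi wj) (hr : r.IsPath) (hrP : ∀ s ∈ r.support, s ∉ pSet p)
    (hwi : G.Adj wi (p.getVert i)) (hwj : G.Adj wj (p.getVert (i+1))) : False := by
  set L := p.length with hL
  set m := r.length with hm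
  set f : ℕ → V := fun k =>
    if k ≤ i then p.getVert k
    else if k ≤ i + 1 + m then r.getVert (k - (i+1))
    else p.getVert (k - m - 1) with hf
  have fv1 : ∀ k, k ≤ i → f k = p.getVert k := by
    intro k hk; simp only [hf]; rw [if_pos hk]
  have fv2 : ∀ k, i < k → k ≤ i + 1 + m → f k = r.getVert (k - (i+1)) := by
    intro k hk1 hk2; simp only [hf]; rw [if_neg (by omega), if_pos hk2]
  have fv3 : ∀ k, i + 1 + m < k → f k = p.getVert (k - m - 1) := by
    intro k hk; simp only [hf]; rw [if_neg (by omega), if_neg (by omega)]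
  have rmem : ∀ k, k ≤ m → r.getVert k ∈ r.support := by
    intro k hk; exact Walk.mem_support_iff_exists_getVert.mpr ⟨k, rfl, hk⟩
  have key : L + m + 1 ≤ L := by
    refine fiber_bound hp f (L + m + 1) ?_ ?_ ?_ ?_
    · rw [fv1 0 (Nat.zero_le _), Walk.getVert_zero]
    · rw [fv3 _ (by omega)]
      have : L + m + 1 - m - 1 = L := by omega
      rw [this, hL, Walk.getVert_length]
    · intro k hk
      rcases lt_or_ge k i with h1 | h1
      · rw [fv1 k (by omega), fv1 (k+1) (by omega)]
        exact p.adj_getVert_succ (by omega)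
      rcases eq_or_lt_of_le h1 with h4 | h2
      · obtain rfl : k = i := h4.symm
        rw [fv1 k le_rfl, fv2 (k+1) (by omega) (by omega)]
        have e0 : k + 1 - (k+1) = 0 := by omega
        rw [e0, Walk.getVert_zero]
        exact hwi.symm
      rcases lt_or_ge k (i + 1 + m) with h3 | h3
      · rw [fv2 k h2 (by omega), fv2 (k+1) (by omega) (by omega)]
        have e : k + 1 - (i+1) = (k - (i+1)) + 1 := by omega
        rw [e]
        exact r.adj_getVert_succ (by omega)
      rcases eq_or_lt_of_le h3 with h4 | h4
      · rw [fv2 k h2 (by omega), fv3 (k+1) (by omega)]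
        have e1 : k - (i+1) = m := by omega
        have e2 : k + 1 - m - 1 = i + 1 := by omega
        rw [e1, e2, hm, Walk.getVert_length]
        exact hwj
      · rw [fv3 k (by omega), fv3 (k+1) (by omega)]
        have e : k + 1 - m - 1 = (k - m - 1) + 1 := by omega
        rw [e]
        exact p.adj_getVert_succ (by omega)
    · intro k1 hk1 k2 hk2 heq
      have inj := getVert_injOn (G := G) hp.1
      by_contra hne
      -- analyze regions
      rcases le_or_gt k1 i with a1 | a1 <;> rcases le_or_gt k2 i with b1 | b1
      · rw [fv1 k1 a1, fv1 k2 b1] at heq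
        exact hne (inj k1 (by omega) k2 (by omega) heq)
      · rcases le_or_gt k2 (i+1+m) with b2 | b2
        · rw [fv1 k1 a1, fv2 k2 b1 b2] at heq
          exact hrP _ (rmem _ (by omega)) (heq ▸ getVert_mem_pSet p (by omega))
        · rw [fv1 k1 a1, fv3 k2 b2] at heq
          have := inj k1 (by omega) (k2 - m - 1) (by omega) heq
          omega
      · rcases le_or_gt k1 (i+1+m) with a2 | a2
        · rw [fv2 k1 a1 a2, fv1 k2 b1] at heq
          exact hrP _ (rmem _ (by omega)) (heq ▸ getVert_mem_pSet p (by omega))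
        · rw [fv3 k1 a2, fv1 k2 b1] at heq
          have := inj (k1 - m - 1) (by omega) k2 (by omega) heq
          omega
      · rcases le_or_gt k1 (i+1+m) with a2 | a2 <;> rcases le_or_gt k2 (i+1+m) with b2 | b2
        · rw [fv2 k1 a1 a2, fv2 k2 b1 b2] at heq
          have := getVert_injOn (G := G) hr _ (show k1 - (i+1) ≤ r.length by omega)
            _ (show k2 - (i+1) ≤ r.length by omega) heq
          omega
        · rw [fv2 k1 a1 a2, fv3 k2 b2] at heq
          exact hrP _ (rmem _ (by omega)) (heq ▸ getVert_mem_pSet p (by omega))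
        · rw [fv3 k1 a2, fv2 k2 b1 b2] at heq
          exact hrP _ (rmem _ (by omega)) (heq.symm ▸ getVert_mem_pSet p (by omega))
        · rw [fv3 k1 a2, fv3 k2 b2] at heq
          have := inj (k1 - m - 1) (by omega) (k2 - m - 1) (by omega) heq
          omega
  omega

/-- Crossing reroute: attachments at `i` and `j`, with an edge between the successors
`i+1` and `j+1`, yield a longer `xy`-path, a contradiction. -/
lemma cross_reroute (hp : p.IsPath ∧ ∀ q : G.Walk x y, q.IsPath → q.length ≤ p.length)
    {i j : ℕ} (hij : i + 2 ≤ j) (hj : j + 1 ≤ p.length)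
    {wi wj : V} (r : G.Walk wi wj) (hr : r.IsPath) (hrP : ∀ s ∈ r.support, s ∉ pSet p)
    (hwi : G.Adj wi (p.getVert i)) (hwj : G.Adj wj (p.getVert j))
    (hcross : G.Adj (p.getVert (i+1)) (p.getVert (j+1))) : False := by
  set L := p.length with hL
  set m := r.length with hm
  set g : ℕ → ℕ := fun k =>
    if k ≤ i then k else if k ≤ m + 1 + j then i + 2 + m + j - k else k - m - 1 with hg
  set f : ℕ → V := fun k =>
    if i < k ∧ k ≤ i + 1 + m then r.getVert (k - (i+1)) else p.getVert (g k) with hf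
  have fvB : ∀ k, i < k → k ≤ i + 1 + m → f k = r.getVert (k - (i+1)) := by
    intro k h1 h2; simp only [hf]; rw [if_pos ⟨h1, h2⟩]
  have fvP : ∀ k, ¬(i < k ∧ k ≤ i + 1 + m) → f k = p.getVert (g k) := by
    intro k h1; simp only [hf]; rw [if_neg h1]
  have gv1 : ∀ k, k ≤ i → g k = k := by
    intro k hk; simp only [hg]; rw [if_pos hk]
  have gv3 : ∀ k, i + 1 + m < k → k ≤ m + 1 + j → g k = i + 2 + m + j - k := by
    intro k h1 h2; simp only [hg]; rw [if_neg (by omega), if_pos h2]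
  have gv4 : ∀ k, m + 1 + j < k → g k = k - m - 1 := by
    intro k h1; simp only [hg]; rw [if_neg (by omega), if_neg (by omega)]
  have gle : ∀ k, k ≤ L + m + 1 → ¬(i < k ∧ k ≤ i + 1 + m) → g k ≤ L := by
    intro k h1 h2
    rcases le_or_gt k i with h3 | h3
    · rw [gv1 k h3]; omega
    rcases le_or_gt k (m+1+j) with h4 | h4
    · rw [gv3 k (by omega) h4]; omega
    · rw [gv4 k h4]; omega
  have ginj : ∀ k1, k1 ≤ L + m + 1 → ¬(i < k1 ∧ k1 ≤ i + 1 + m) →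
      ∀ k2, k2 ≤ L + m + 1 → ¬(i < k2 ∧ k2 ≤ i + 1 + m) → g k1 = g k2 → k1 = k2 := by
    intro k1 h1 h2 k2 h3 h4 h5
    simp only [hg] at h5
    split_ifs at h5 <;> omega
  have rmem : ∀ k, k ≤ m → r.getVert k ∈ r.support := by
    intro k hk; exact Walk.mem_support_iff_exists_getVert.mpr ⟨k, rfl, hk⟩
  have key : L + m + 1 ≤ L := by
    refine fiber_bound hp f (L + m + 1) ?_ ?_ ?_ ?_
    · rw [fvP 0 (by omega), gv1 0 (by omega), Walk.getVert_zero]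
    · rw [fvP _ (by omega), gv4 _ (by omega)]
      have e : L + m + 1 - m - 1 = L := by omega
      rw [e, hL, Walk.getVert_length]
    · intro k hk
      rcases lt_or_ge k i with h1 | h1
      · rw [fvP k (by omega), fvP (k+1) (by omega), gv1 k (by omega), gv1 (k+1) (by omega)]
        exact p.adj_getVert_succ (by omega)
      rcases eq_or_lt_of_le h1 with h4 | h2
      · obtain rfl : k = i := h4.symm
        rw [fvP k (by omega), fvB (k+1) (by omega) (by omega), gv1 k le_rfl]
        have e0 : k + 1 - (k+1) = 0 := by omega
        rw [e0, Walk.getVert_zero]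
        exact hwi.symm
      rcases lt_or_ge k (i + 1 + m) with h3 | h3
      · rw [fvB k h2 (by omega), fvB (k+1) (by omega) (by omega)]
        have e : k + 1 - (i+1) = (k - (i+1)) + 1 := by omega
        rw [e]
        exact r.adj_getVert_succ (by omega)
      rcases eq_or_lt_of_le h3 with h4 | h4
      · rw [fvB k h2 (by omega), fvP (k+1) (by omega), gv3 (k+1) (by omega) (by omega)]
        have e1 : k - (i+1) = m := by omega
        have e2 : i + 2 + m + j - (k+1) = j := by omega
        rw [e1, e2, hm, Walk.getVert_length]
        exact hwj
      rcases lt_or_ge k (m + 1 + j) with h5 | h5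
      · rw [fvP k (by omega), fvP (k+1) (by omega), gv3 k (by omega) (by omega)]
        rcases eq_or_lt_of_le (show k + 1 ≤ m + 1 + j by omega) with h6 | h6
        · -- k+1 = m+1+j : next vertex is p.getVert (i+1), then edge case below? no:
          -- here k+1 ≤ m+1+j so still region C
          rw [gv3 (k+1) (by omega) (by omega)]
          have e : i + 2 + m + j - k = (i + 2 + m + j - (k+1)) + 1 := by omega
          rw [e]
          exact (p.adj_getVert_succ (by omega)).symm
        · rw [gv3 (k+1) (by omega) (by omega)]
          have e : i + 2 + m + j - k = (i + 2 + m + j - (k+1)) + 1 := by omega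
          rw [e]
          exact (p.adj_getVert_succ (by omega)).symm
      rcases eq_or_lt_of_le h5 with h6 | h6
      · have h7 : k = m + 1 + j := h6.symm
        rw [fvP k (by omega), fvP (k+1) (by omega), gv3 k (by omega) (by omega),
          gv4 (k+1) (by omega)]
        have e1 : i + 2 + m + j - k = i + 1 := by omega
        have e2 : k + 1 - m - 1 = j + 1 := by omega
        rw [e1, e2]
        exact hcross
      · rw [fvP k (by omega), fvP (k+1) (by omega), gv4 k h6, gv4 (k+1) (by omega)]
        have e : k + 1 - m - 1 = (k - m - 1) + 1 := by omega
        rw [e]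
        exact p.adj_getVert_succ (by omega)
    · intro k1 hk1 k2 hk2 heq
      by_contra hne
      by_cases c1 : i < k1 ∧ k1 ≤ i + 1 + m <;> by_cases c2 : i < k2 ∧ k2 ≤ i + 1 + m
      · rw [fvB k1 c1.1 c1.2, fvB k2 c2.1 c2.2] at heq
        have := getVert_injOn (G := G) hr _ (show k1 - (i+1) ≤ r.length by omega)
          _ (show k2 - (i+1) ≤ r.length by omega) heq
        omega
      · rw [fvB k1 c1.1 c1.2, fvP k2 c2] at heq
        exact hrP _ (rmem _ (by omega)) (heq ▸ getVert_mem_pSet p (gle k2 hk2 c2))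
      · rw [fvP k1 c1, fvB k2 c2.1 c2.2] at heq
        exact hrP _ (rmem _ (by omega)) (heq.symm ▸ getVert_mem_pSet p (gle k1 hk1 c1))
      · rw [fvP k1 c1, fvP k2 c2] at heq
        exact hne (ginj k1 hk1 c1 k2 hk2 c2
          (getVert_injOn (G := G) hp.1 _ (gle k1 hk1 c1) _ (gle k2 hk2 c2) heq))
  omega

end Fiber

section Main

variable {G : SimpleGraph V} [Fintype V] {x y : V} {p : G.Walk x y} {z : V}

/-- Indices of attachment points of the component `H` on `p`. -/
def attachI (G : SimpleGraph V) {x y : V} (p : G.Walk x y) (H : Set V) : Set ℕ :=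
  {i | i ≤ p.length ∧ ∃ h ∈ H, G.Adj h (p.getVert i)}

lemma fiber_reverse (hp : p.IsPath ∧ ∀ q : G.Walk x y, q.IsPath → q.length ≤ p.length) :
    p.reverse.IsPath ∧ ∀ q : G.Walk y x, q.IsPath → q.length ≤ p.reverse.length := by
  refine ⟨hp.1.reverse, fun q hq => ?_⟩
  rw [Walk.length_reverse]
  simpa [Walk.length_reverse] using hp.2 q.reverse hq.reverse

lemma pSet_reverse (p : G.Walk x y) : pSet p.reverse = pSet p := by
  ext t; simp [pSet, Walk.support_reverse]

lemma comp_subset_compl (hz : z ∉ pSet p) {u : V} (hu : u ∈ comp G (pSet p) z) :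
    u ∉ pSet p := comp_not_mem hu

/-- A neighbour of the component `H` which is not in `H` lies on `p`. -/
lemma nbr_on_path (hz : z ∉ pSet p) {u t : V} (hu : u ∈ comp G (pSet p) z)
    (ht : t ∉ comp G (pSet p) z) (hadj : G.Adj u t) : t ∈ pSet p := by
  by_contra htP
  exact ht (comp_closure hu hadj htP)

/-- Any component off the fiber has at least two attachment indices. -/
lemma two_attach (hxy : x ≠ y)
    (h2 : ∀ s : Set V, s.ncard < 2 → (G.induce sᶜ).Connected)
    (hz : z ∉ pSet p) :
    ∃ i1 i2, i1 ∈ attachI G p (comp G (pSet p) z) ∧ i2 ∈ attachI G p (comp G (pSet p) z) ∧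
      i1 ≠ i2 := by
  set H := comp G (pSet p) z with hH
  have hxP : x ∈ pSet p := p.start_mem_support
  have hyP : y ∈ pSet p := p.end_mem_support
  have hzH : z ∈ H := comp_self hz
  have hget : ∀ {i1 : ℕ}, i1 ≤ p.length → ∀ {u : V}, u ∈ H → G.Adj u (p.getVert i1) →
      i1 ∈ attachI G p H := by
    intro i1 h1 u hu hadj
    exact ⟨h1, u, hu, hadj⟩
  -- first attachment
  have step : ∀ (w t : V), t ∈ pSet p → t ∉ H → z ≠ w → t ≠ w →
      ∃ i, i ∈ attachI G p H ∧ p.getVert i ≠ w := by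
    intro w t htP htH hzw htw
    obtain ⟨q, hq⟩ := avoid h2 w z t hzw htw
    obtain ⟨u, s, hadj, huH, hsH, _, hsq⟩ := exists_cross q hzH htH
    have hsP : s ∈ pSet p := nbr_on_path hz huH hsH hadj
    obtain ⟨i, hi, hile⟩ := Walk.mem_support_iff_exists_getVert.mp hsP
    refine ⟨i, hget hile huH (hi ▸ hadj), ?_⟩
    rw [hi]
    exact hq s hsq
  have hxH : x ∉ H := fun h => comp_not_mem h hxP
  have hyH : y ∉ H := fun h => comp_not_mem h hyP
  have hzy : z ≠ y := fun h => hz (h ▸ hyP)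
  obtain ⟨i1, hi1, -⟩ := step y x hxP hxH hzy hxy
  by_cases hc : p.getVert i1 = x
  · obtain ⟨i2, hi2, hne⟩ := step (p.getVert i1) y hyP hyH
      (fun h => hz (h ▸ getVert_mem_pSet p hi1.1)) (by rw [hc]; exact fun h => hxy h.symm)
    exact ⟨i1, i2, hi1, hi2, fun h => hne (h ▸ rfl)⟩
  · obtain ⟨i2, hi2, hne⟩ := step (p.getVert i1) x hxP hxH
      (fun h => hz (h ▸ getVert_mem_pSet p hi1.1)) (fun h => hc h.symm)
    exact ⟨i1, i2, hi1, hi2, fun h => hne (h ▸ rfl)⟩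

/-- No two consecutive attachment indices. -/
lemma no_consec_attach (hp : p.IsPath ∧ ∀ q : G.Walk x y, q.IsPath → q.length ≤ p.length)
    (hz : z ∉ pSet p) {i : ℕ} (hi : i ∈ attachI G p (comp G (pSet p) z))
    (hi1 : i + 1 ∈ attachI G p (comp G (pSet p) z)) : False := by
  obtain ⟨hile, wi, hwiH, hwi⟩ := hi
  obtain ⟨hi1le, wj, hwjH, hwj⟩ := hi1
  obtain ⟨r, hrpath, hrP⟩ := comp_path hwiH hwjH
  exact no_consec hp hi1le r hrpath hrP hwi hwj

/-- One-sided structure: no two attachments both at distance ≥ 2 from the end. -/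
lemma side_attach (hp : p.IsPath ∧ ∀ q : G.Walk x y, q.IsPath → q.length ≤ p.length)
    (halpha : ∀ A : Set V, x ∉ A → y ∉ A → IsIndepSet G A → A.ncard ≤ 2)
    (hz : z ∉ pSet p) {i j : ℕ} (hi : i ∈ attachI G p (comp G (pSet p) z))
    (hj : j ∈ attachI G p (comp G (pSet p) z)) (hij : i < j) (hjL : j + 2 ≤ p.length) :
    False := by
  set H := comp G (pSet p) z with hH
  have hij2 : i + 2 ≤ j := by
    rcases eq_or_lt_of_le (show i + 1 ≤ j by omega) with h | h
    · exact absurd (h ▸ hj) (fun hc => no_consec_attach hp hz hi hc)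
    · omega
  obtain ⟨hile, wi, hwiH, hwi⟩ := hi
  obtain ⟨hjle, wj, hwjH, hwj⟩ := hj
  obtain ⟨r, hrpath, hrP⟩ := comp_path hwiH hwjH
  have inj := getVert_injOn (G := G) hp.1
  by_cases hcross : G.Adj (p.getVert (i+1)) (p.getVert (j+1))
  · exact cross_reroute hp hij2 (by omega) r hrpath hrP hwi hwj hcross
  -- independent triple
  have hzH : z ∈ H := comp_self hz
  have hnb1 : ¬ G.Adj z (p.getVert (i+1)) := by
    intro h
    exact no_consec_attach hp hz ⟨hile, wi, hwiH, hwi⟩ ⟨by omega, z, hzH, h⟩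
  have hnb2 : ¬ G.Adj z (p.getVert (j+1)) := by
    intro h
    exact no_consec_attach hp hz ⟨hjle, wj, hwjH, hwj⟩ ⟨by omega, z, hzH, h⟩
  have hzp : ∀ k, k ≤ p.length → z ≠ p.getVert k := by
    intro k hk h
    exact hz (h ▸ getVert_mem_pSet p hk)
  have hxg : ∀ k, k ≤ p.length → k ≠ 0 → x ≠ p.getVert k := by
    intro k hk hk0 h
    have := inj 0 (by omega) k hk (by rw [← h, Walk.getVert_zero])
    omega
  have hyg : ∀ k, k ≤ p.length → k ≠ p.length → y ≠ p.getVert k := by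
    intro k hk hkL h
    have := inj p.length le_rfl k hk (by rw [← h, Walk.getVert_length])
    omega
  refine indep3 halpha (u1 := z) (u2 := p.getVert (i+1)) (u3 := p.getVert (j+1))
    (hzp _ (by omega)) (hzp _ (by omega))
    (fun h => by have := inj (i+1) (by omega) (j+1) (by omega) h; omega)
    hnb1 hnb2 hcross
    (fun h => hz (h ▸ p.start_mem_support)) (hxg _ (by omega) (by omega))
    (hxg _ (by omega) (by omega))
    (fun h => hz (h ▸ p.end_mem_support)) (hyg _ (by omega) (by omega))
    (hyg _ (by omega) (by omega))

lemma attachI_reverse {H : Set V} {i : ℕ} (hi : i ≤ p.length) :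
    i ∈ attachI G p.reverse H ↔ (p.length - i) ∈ attachI G p H := by
  unfold attachI
  simp only [Set.mem_setOf_eq, Walk.length_reverse, Walk.getVert_reverse]
  constructor
  · rintro ⟨h1, h, hh, ha⟩
    exact ⟨by omega, h, hh, ha⟩
  · rintro ⟨h1, h, hh, ha⟩
    exact ⟨by omega, h, hh, ha⟩

lemma struct_attach (hxy : x ≠ y)
    (h2 : ∀ s : Set V, s.ncard < 2 → (G.induce sᶜ).Connected)
    (hp : p.IsPath ∧ ∀ q : G.Walk x y, q.IsPath → q.length ≤ p.length)
    (halpha : ∀ A : Set V, x ∉ A → y ∉ A → IsIndepSet G A → A.ncard ≤ 2)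
    (hz : z ∉ pSet p) :
    ∃ a b, a ≤ 1 ∧ p.length - 1 ≤ b ∧ b ≤ p.length ∧ a + 2 ≤ b ∧
      attachI G p (comp G (pSet p) z) = {a, b} := by
  set L := p.length with hL
  set S := attachI G p (comp G (pSet p) z) with hS
  have hzr : z ∉ pSet p.reverse := by rw [pSet_reverse]; exact hz
  have hcompr : comp G (pSet p.reverse) z = comp G (pSet p) z := by rw [pSet_reverse]
  have sideR : ∀ i j, i ∈ S → j ∈ S → i < j → 2 ≤ i → False := by
    intro i j hiS hjS hij h2i
    have hjle : j ≤ L := hjS.1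
    have h1 : (L - j) ∈ attachI G p.reverse (comp G (pSet p.reverse) z) := by
      rw [hcompr, attachI_reverse (by omega)]
      have e : L - (L - j) = j := by omega
      rw [hL] at e ⊢
      rw [e]
      exact hjS
    have h2' : (L - i) ∈ attachI G p.reverse (comp G (pSet p.reverse) z) := by
      rw [hcompr, attachI_reverse (by omega)]
      have e : L - (L - i) = i := by omega
      rw [hL] at e ⊢
      rw [e]
      exact hiS
    refine side_attach (p := p.reverse) (fiber_reverse hp)
      (fun A hA1 hA2 => halpha A hA2 hA1) hzr h1 h2' (by omega) ?_
    rw [Walk.length_reverse]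
    omega
  have claim : ∀ k, k ∈ S → k ≤ 1 ∨ L - 1 ≤ k := by
    intro k hkS
    by_contra hcon
    push_neg at hcon
    obtain ⟨i1, i2, h1, h2, hne⟩ := two_attach hxy h2 hz
    have hother : ∃ o, o ∈ S ∧ o ≠ k := by
      by_cases h : i1 = k
      · exact ⟨i2, h2, fun hc => hne (by omega)⟩
      · exact ⟨i1, h1, h⟩
    obtain ⟨o, hoS, hok⟩ := hother
    have hkL : k ≤ L := hkS.1
    have hoL : o ≤ L := hoS.1
    rcases lt_or_gt_of_ne hok with h | h
    · exact side_attach hp halpha hz hoS hkS h (by omega)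
    · exact sideR k o hkS hoS h (by omega)
  obtain ⟨i1, i2, h1, h2, hne⟩ := two_attach hxy h2 hz
  have hcons : ∀ i, i ∈ S → i + 1 ∈ S → False := fun i hi hi1 =>
    no_consec_attach hp hz hi hi1
  -- order the two attachments
  obtain ⟨a, b, haS, hbS, hab⟩ : ∃ a b, a ∈ S ∧ b ∈ S ∧ a < b := by
    rcases lt_or_gt_of_ne hne with h | h
    · exact ⟨i1, i2, h1, h2, h⟩
    · exact ⟨i2, i1, h2, h1, h⟩
  have haL : a ≤ L := haS.1
  have hbL : b ≤ L := hbS.1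
  have hab2 : a + 2 ≤ b := by
    rcases eq_or_lt_of_le (show a + 1 ≤ b by omega) with h | h
    · exact absurd (h ▸ hbS) (fun hc => hcons a haS hc)
    · omega
  have ha1 : a ≤ 1 := by
    rcases claim a haS with h | h
    · exact h
    · -- a ≥ L - 1, b ≥ a + 2 > L : contradiction
      omega
  have hb1 : L - 1 ≤ b := by
    rcases claim b hbS with h | h
    · omega
    · exact h
  refine ⟨a, b, ha1, hb1, hbL, hab2, ?_⟩
  ext k
  simp only [Set.mem_insert_iff, Set.mem_singleton_iff]
  constructor
  · intro hkS
    by_contra hk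
    push_neg at hk
    obtain ⟨hka, hkb⟩ := hk
    rcases claim k hkS with h | h
    · -- k ≤ 1, a ≤ 1, k ≠ a : {0,1} ⊆ S
      have : (k = 0 ∧ a = 1) ∨ (k = 1 ∧ a = 0) := by omega
      rcases this with ⟨rfl, ha0⟩ | ⟨rfl, ha0⟩
      · exact hcons 0 hkS (by have := ha0 ▸ haS; simpa using this)
      · exact (hcons 0 (ha0 ▸ haS) (by simpa using hkS)).elim
    · have hkL : k ≤ L := hkS.1
      have : (k = L - 1 ∧ b = L) ∨ (k = L ∧ b = L - 1) := by omega
      have hL1 : L - 1 + 1 = L := by omega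
      rcases this with ⟨rfl, hb0⟩ | ⟨rfl, hb0⟩
      · exact (hcons (L-1) hkS (by rw [hL1]; exact hb0 ▸ hbS)).elim
      · exact (hcons (L-1) (hb0 ▸ hbS) (by rw [hL1]; exact hkS)).elim
  · rintro (rfl | rfl)
    · exact haS
    · exact hbS

/-- Degree bound for the base of a component with attachment indices `{a, b}`. -/
lemma deg_z_le (hz : z ∉ pSet p) [DecidableRel G.Adj] {a b : ℕ}
    (hS : attachI G p (comp G (pSet p) z) = {a, b}) :
    G.degree z ≤ (comp G (pSet p) z).ncard + 1 := by
  classical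
  set H := comp G (pSet p) z with hH
  have hzH : z ∈ H := comp_self hz
  have hHfin : H.Finite := Set.toFinite H
  have hsub : G.neighborFinset z ⊆ insert (p.getVert a) (insert (p.getVert b)
      (hHfin.toFinset.erase z)) := by
    intro t ht
    rw [mem_neighborFinset] at ht
    by_cases htP : t ∈ pSet p
    · obtain ⟨i, hi, hile⟩ := Walk.mem_support_iff_exists_getVert.mp htP
      have hiS : i ∈ attachI G p H := ⟨hile, z, hzH, hi ▸ ht⟩
      rw [hS] at hiS
      simp only [Set.mem_insert_iff, Set.mem_singleton_iff] at hiS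
      rcases hiS with rfl | rfl
      · simp [hi]
      · simp [hi]
    · have htH : t ∈ H := comp_closure hzH ht htP
      simp only [Finset.mem_insert, Finset.mem_erase]
      right; right
      exact ⟨fun h => G.irrefl (h ▸ ht), by
        simpa [Set.Finite.mem_toFinset] using htH⟩
  have hcard := Finset.card_le_card hsub
  have h1 : (insert (p.getVert a) (insert (p.getVert b) (hHfin.toFinset.erase z))).card ≤
      (hHfin.toFinset.erase z).card + 2 := by
    refine le_trans (Finset.card_insert_le _ _) ?_
    have := Finset.card_insert_le (p.getVert b) (hHfin.toFinset.erase z)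
    omega
  have h2 : (hHfin.toFinset.erase z).card = hHfin.toFinset.card - 1 :=
    Finset.card_erase_of_mem (by simpa [Set.Finite.mem_toFinset] using hzH)
  have h3 : hHfin.toFinset.card = H.ncard := (Set.ncard_eq_toFinset_card H hHfin).symm
  have h4 : 1 ≤ hHfin.toFinset.card := Finset.card_pos.mpr
    ⟨z, by simpa [Set.Finite.mem_toFinset] using hzH⟩
  rw [SimpleGraph.degree]
  omega

/-- Main contradiction: if the component of a max-degree vertex `z` off the fiber attaches
at `{1, b}` (an internal attachment at index 1), we get a contradiction. -/
lemma internal_contra [DecidableRel G.Adj] (hxy : x ≠ y)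
    (h2 : ∀ s : Set V, s.ncard < 2 → (G.induce sᶜ).Connected)
    (hp : p.IsPath ∧ ∀ q : G.Walk x y, q.IsPath → q.length ≤ p.length)
    (halpha : ∀ A : Set V, x ∉ A → y ∉ A → IsIndepSet G A → A.ncard ≤ 2)
    (hz : z ∉ pSet p) (hdeg : G.degree z = G.maxDegree)
    {b : ℕ} (hb3 : 3 ≤ b) (hbL : b ≤ p.length)
    (hS : attachI G p (comp G (pSet p) z) = {1, b}) : False := by
  classical
  set L := p.length with hL
  set H := comp G (pSet p) z with hH
  have hHfin : H.Finite := Set.toFinite H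
  set m := H.ncard with hm
  have hzH : z ∈ H := comp_self hz
  have hm1 : 1 ≤ m := (Set.ncard_pos hHfin).mpr ⟨z, hzH⟩
  have hdegz : G.degree z ≤ m + 1 := deg_z_le hz hS
  have hub : ∀ w, G.degree w ≤ m + 1 := fun w =>
    le_trans (G.degree_le_maxDegree w) (hdeg ▸ hdegz)
  have hLb : 3 ≤ L := le_trans hb3 hbL
  have inj := getVert_injOn (G := G) hp.1
  have hHP : ∀ h ∈ H, h ∉ pSet p := fun h hh => comp_not_mem hh
  have hcardH : hHfin.toFinset.card = m := (Set.ncard_eq_toFinset_card H hHfin).symm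
  have hnotmem : ∀ {i : ℕ}, i ≤ L → i ≠ 1 → i ≠ b → ∀ h ∈ H, ¬ G.Adj h (p.getVert i) := by
    intro i hiL hi1 hib h hh hadj
    have : i ∈ attachI G p H := ⟨hiL, h, hh, hadj⟩
    rw [hS] at this
    simp only [Set.mem_insert_iff, Set.mem_singleton_iff] at this
    omega
  have hadjless : ∀ w, m + 2 ≤ G.degree w → False := fun w hw => by have := hub w; omega
  by_cases hall : ∀ h ∈ H, G.Adj h (p.getVert 1)
  · -- all of H adjacent to p₁ : degree of p₁ is at least m + 2
    refine hadjless (p.getVert 1) ?_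
    have hsub : insert (p.getVert 0) (insert (p.getVert 2) hHfin.toFinset) ⊆
        G.neighborFinset (p.getVert 1) := by
      intro t ht
      rw [mem_neighborFinset]
      simp only [Finset.mem_insert, Set.Finite.mem_toFinset] at ht
      rcases ht with rfl | rfl | ht
      · exact (p.adj_getVert_succ (by omega)).symm
      · exact p.adj_getVert_succ (by omega)
      · exact (hall t ht).symm
    have hc1 : p.getVert 0 ∉ insert (p.getVert 2) hHfin.toFinset := by
      simp only [Finset.mem_insert, Set.Finite.mem_toFinset]
      push_neg
      constructor
      · intro h
        have := inj 0 (by omega) 2 (by omega) h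
        omega
      · intro h
        exact hHP _ h (getVert_mem_pSet p (by omega))
    have hc2 : p.getVert 2 ∉ hHfin.toFinset := by
      rw [Set.Finite.mem_toFinset]
      intro h
      exact hHP _ h (getVert_mem_pSet p (by omega))
    have := Finset.card_le_card hsub
    rw [Finset.card_insert_of_notMem hc1, Finset.card_insert_of_notMem hc2, hcardH] at this
    rw [SimpleGraph.degree]
    omega
  · push_neg at hall
    obtain ⟨h0, hh0, hnadj0⟩ := hall
    -- H is a clique
    have hclique : ∀ h ∈ H, ∀ h' ∈ H, h ≠ h' → G.Adj h h' := by
      intro h hh h' hh' hne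
      by_contra hadj
      refine indep3 halpha (u1 := h) (u2 := h') (u3 := p.getVert 2) hne
        (fun he => hHP h hh (he ▸ getVert_mem_pSet p (by omega)))
        (fun he => hHP h' hh' (he ▸ getVert_mem_pSet p (by omega)))
        hadj
        (hnotmem (by omega) (by omega) (by omega) h hh)
        (hnotmem (by omega) (by omega) (by omega) h' hh')
        (fun he => hHP h hh (he ▸ p.start_mem_support))
        (fun he => hHP h' hh' (he ▸ p.start_mem_support))
        (fun he => by
          have := inj 0 (by omega) 2 (by omega) (by rw [Walk.getVert_zero]; exact he)
          omega)
        (fun he => hHP h hh (he ▸ p.end_mem_support))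
        (fun he => hHP h' hh' (he ▸ p.end_mem_support))
        (fun he => by
          have := inj L le_rfl 2 (by omega) (by rw [hL, Walk.getVert_length]; exact he)
          omega)
    -- attachment witnesses
    have h1S : (1 : ℕ) ∈ attachI G p H := by rw [hS]; simp
    have hbS : b ∈ attachI G p H := by rw [hS]; simp
    obtain ⟨-, w1, hw1H, hw1⟩ := h1S
    obtain ⟨-, wb, hwbH, hwb⟩ := hbS
    -- Hamiltonian path through H from a neighbour of p₁ to a neighbour of p_b
    have hamH : ∃ (hs ht : V) (r : G.Walk hs ht), hs ∈ H ∧ ht ∈ H ∧ r.IsPath ∧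
        (∀ t, t ∈ r.support ↔ t ∈ H) ∧ r.length + 1 = m ∧
        G.Adj hs (p.getVert 1) ∧ G.Adj ht (p.getVert b) := by
      by_cases hex : ∃ hs ht, hs ∈ H ∧ ht ∈ H ∧ G.Adj hs (p.getVert 1) ∧
          G.Adj ht (p.getVert b) ∧ hs ≠ ht
      · obtain ⟨hs, ht, hsH, htH, hadjs, hadjt, hsne⟩ := hex
        have hm2 : 2 ≤ m :=
          (Set.one_lt_ncard hHfin).mpr ⟨hs, hsH, ht, htH, hsne⟩
        obtain ⟨r, hr1, hr2, hr3⟩ := clique_ham (m - 2) H (by omega)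
          (fun a ha b hb hne => hclique a ha b hb hne) hs ht hsH htH hsne
        exact ⟨hs, ht, r, hsH, htH, hr1, hr2, by omega, hadjs, hadjt⟩
      · push_neg at hex
        have hww : w1 = wb := hex w1 wb hw1H hwbH hw1 hwb
        have huniq : ∀ h ∈ H, (G.Adj h (p.getVert 1) ∨ G.Adj h (p.getVert b)) → h = w1 := by
          intro h hh hor
          rcases hor with h' | h'
          · exact (hex h wb hh hwbH h' hwb).trans hww.symm
          · exact (hex w1 h hw1H hh hw1 h').symm
        by_cases hm2 : m = 1
        · -- H = {w1}
          have hHeq : H = {w1} := by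
            have hsub : {w1} ⊆ H := by simp [hw1H]
            exact (Set.eq_of_subset_of_ncard_le hsub (by rw [Set.ncard_singleton]; omega)
              hHfin).symm
          refine ⟨w1, w1, Walk.nil, hw1H, hw1H, by simp, ?_, by simp [hm2], hw1, ?_⟩
          · intro t
            simp [hHeq]
          · have : wb = w1 := by
              have := hHeq ▸ hwbH
              simpa using this
            exact this ▸ hwb
        · -- m ≥ 2 : w1 is a cut vertex, contradiction
          exfalso
          have hex2 : ∃ u ∈ H, u ≠ w1 := by
            by_contra hc
            push_neg at hc
            have hsub : H ⊆ {w1} := fun u hu => hc u hu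
            have := Set.ncard_le_ncard hsub (Set.finite_singleton w1)
            rw [Set.ncard_singleton] at this
            omega
          obtain ⟨u, huH, hune⟩ := hex2
          have hxw : x ≠ w1 := fun h => hHP w1 hw1H (h ▸ p.start_mem_support)
          obtain ⟨q, hq⟩ := avoid h2 w1 u x hune hxw
          have hxH : x ∉ H := fun h => hHP x h p.start_mem_support
          obtain ⟨u', t', hadj', hu'H, ht'H, hu'q, ht'q⟩ := exists_cross q huH hxH
          have ht'P : t' ∈ pSet p := nbr_on_path hz hu'H ht'H hadj'
          obtain ⟨i, hi, hile⟩ := Walk.mem_support_iff_exists_getVert.mp ht'P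
          have hiS : i ∈ attachI G p H := ⟨hile, u', hu'H, hi ▸ hadj'⟩
          rw [hS] at hiS
          simp only [Set.mem_insert_iff, Set.mem_singleton_iff] at hiS
          have : u' = w1 := by
            refine huniq u' hu'H ?_
            rcases hiS with rfl | rfl
            · exact Or.inl (hi ▸ hadj')
            · exact Or.inr (hi ▸ hadj')
          exact hq u' hu'q this
    obtain ⟨hs, ht, r, hsH, htH, hrpath, hrsupp, hrlen, hws, hwt⟩ := hamH
    have rP : ∀ t ∈ r.support, t ∉ pSet p := fun t htr => hHP t ((hrsupp t).mp htr)
    have hrL : r.length = m - 1 := by omega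
    -- spanning bound : b ≥ m + 2
    have hbound : m + 2 ≤ b := by
      set f : ℕ → V := fun k =>
        if k ≤ 1 then p.getVert k
        else if k ≤ m + 1 then r.getVert (k - 2)
        else p.getVert (b + k - (m + 2)) with hf
      have fvP : ∀ k, k ≤ 1 → f k = p.getVert k := by
        intro k hk; simp only [hf]; rw [if_pos hk]
      have fvB : ∀ k, 2 ≤ k → k ≤ m + 1 → f k = r.getVert (k - 2) := by
        intro k h1 h2; simp only [hf]; rw [if_neg (by omega), if_pos h2]
      have fvT : ∀ k, m + 2 ≤ k → f k = p.getVert (b + k - (m + 2)) := by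
        intro k h1; simp only [hf]; rw [if_neg (by omega), if_neg (by omega)]
      have rmem : ∀ k, k ≤ r.length → r.getVert k ∈ r.support := by
        intro k hk; exact Walk.mem_support_iff_exists_getVert.mpr ⟨k, rfl, hk⟩
      have key : m + 2 + (L - b) ≤ L := by
        refine fiber_bound hp f (m + 2 + (L - b)) ?_ ?_ ?_ ?_
        · rw [fvP 0 (by omega), Walk.getVert_zero]
        · rw [fvT _ (by omega)]
          have e : b + (m + 2 + (L - b)) - (m + 2) = L := by omega
          rw [e, hL, Walk.getVert_length]
        · intro k hk
          rcases Nat.lt_or_ge k 1 with h1 | h1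
          · have h0 : k = 0 := by omega
            rw [h0, fvP 0 (by omega), fvP 1 (by omega)]
            exact p.adj_getVert_succ (by omega)
          rcases eq_or_lt_of_le h1 with h4 | h2
          · obtain rfl : k = 1 := h4.symm
            rw [fvP 1 le_rfl, fvB 2 (by omega) (by omega)]
            rw [show (2:ℕ) - 2 = 0 from rfl, Walk.getVert_zero]
            exact hws.symm
          rcases Nat.lt_or_ge k (m+1) with h3 | h3
          · rw [fvB k (by omega) (by omega), fvB (k+1) (by omega) (by omega)]
            have e : k + 1 - 2 = (k - 2) + 1 := by omega
            rw [e]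
            exact r.adj_getVert_succ (by omega)
          rcases eq_or_lt_of_le h3 with h4 | h4
          · have h7 : k = m + 1 := h4.symm
            rw [fvB k (by omega) (by omega), fvT (k+1) (by omega)]
            have e1 : k - 2 = r.length := by omega
            have e2 : b + (k + 1) - (m + 2) = b := by omega
            rw [e1, e2, Walk.getVert_length]
            exact hwt
          · rw [fvT k (by omega), fvT (k+1) (by omega)]
            have e : b + (k + 1) - (m + 2) = (b + k - (m + 2)) + 1 := by omega
            rw [e]
            exact p.adj_getVert_succ (by omega)
        · intro k1 hk1 k2 hk2 heq
          by_contra hne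
          rcases Nat.lt_or_ge k1 2 with a1 | a1 <;> rcases Nat.lt_or_ge k2 2 with b1 | b1
          · rw [fvP k1 (by omega), fvP k2 (by omega)] at heq
            exact hne (inj k1 (by omega) k2 (by omega) heq)
          · rcases Nat.lt_or_ge k2 (m+2) with b2 | b2
            · rw [fvP k1 (by omega), fvB k2 (by omega) (by omega)] at heq
              exact rP _ (rmem _ (by omega)) (heq ▸ getVert_mem_pSet p (by omega))
            · rw [fvP k1 (by omega), fvT k2 b2] at heq
              have := inj k1 (by omega) (b + k2 - (m+2)) (by omega) heq
              omega
          · rcases Nat.lt_or_ge k1 (m+2) with a2 | a2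
            · rw [fvB k1 (by omega) (by omega), fvP k2 (by omega)] at heq
              exact rP _ (rmem _ (by omega)) (heq ▸ getVert_mem_pSet p (by omega))
            · rw [fvT k1 a2, fvP k2 (by omega)] at heq
              have := inj (b + k1 - (m+2)) (by omega) k2 (by omega) heq
              omega
          · rcases Nat.lt_or_ge k1 (m+2) with a2 | a2 <;> rcases Nat.lt_or_ge k2 (m+2) with b2 | b2
            · rw [fvB k1 (by omega) (by omega), fvB k2 (by omega) (by omega)] at heq
              have := getVert_injOn (G := G) hrpath _ (show k1 - 2 ≤ r.length by omega)
                _ (show k2 - 2 ≤ r.length by omega) heq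
              omega
            · rw [fvB k1 (by omega) (by omega), fvT k2 b2] at heq
              exact rP _ (rmem _ (by omega)) (heq ▸ getVert_mem_pSet p (by omega))
            · rw [fvT k1 a2, fvB k2 (by omega) (by omega)] at heq
              exact rP _ (rmem _ (by omega)) (heq.symm ▸ getVert_mem_pSet p (by omega))
            · rw [fvT k1 a2, fvT k2 b2] at heq
              have := inj (b + k1 - (m+2)) (by omega) (b + k2 - (m+2)) (by omega) heq
              omega
      omega
    -- degree of p₁ is at least b ≥ m + 2
    refine hadjless (p.getVert 1) ?_
    have hadjk : ∀ k, (k = 0 ∨ (2 ≤ k ∧ k ≤ b - 1)) → G.Adj (p.getVert 1) (p.getVert k) := by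
      intro k hk
      rcases hk with rfl | ⟨hk2, hkb⟩
      · exact (p.adj_getVert_succ (by omega)).symm
      · by_contra hadj
        refine indep3 halpha (u1 := h0) (u2 := p.getVert 1) (u3 := p.getVert k)
          (fun he => hHP h0 hh0 (he ▸ getVert_mem_pSet p (by omega)))
          (fun he => hHP h0 hh0 (he ▸ getVert_mem_pSet p (by omega)))
          (fun he => by have := inj 1 (by omega) k (by omega) he; omega)
          hnadj0
          (hnotmem (by omega) (by omega) (by omega) h0 hh0)
          hadj
          (fun he => hHP h0 hh0 (he ▸ p.start_mem_support))
          (fun he => by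
            have := inj 0 (by omega) 1 (by omega) (by rw [Walk.getVert_zero]; exact he)
            omega)
          (fun he => by
            have := inj 0 (by omega) k (by omega) (by rw [Walk.getVert_zero]; exact he)
            omega)
          (fun he => hHP h0 hh0 (he ▸ p.end_mem_support))
          (fun he => by
            have := inj L le_rfl 1 (by omega) (by rw [hL, Walk.getVert_length]; exact he)
            omega)
          (fun he => by
            have := inj L le_rfl k (by omega) (by rw [hL, Walk.getVert_length]; exact he)
            omega)
    have hsub : insert w1 ((insert 0 (Finset.Icc 2 (b-1))).image p.getVert) ⊆
        G.neighborFinset (p.getVert 1) := by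
      intro t ht
      rw [mem_neighborFinset]
      simp only [Finset.mem_insert, Finset.mem_image] at ht
      rcases ht with rfl | ⟨k, hk, rfl⟩
      · exact hw1.symm
      · rcases hk with rfl | hk
        · exact hadjk 0 (Or.inl rfl)
        · rw [Finset.mem_Icc] at hk
          exact hadjk k (Or.inr hk)
    have hw1img : w1 ∉ (insert 0 (Finset.Icc 2 (b-1))).image p.getVert := by
      rw [Finset.mem_image]
      rintro ⟨k, hk, he⟩
      rcases Finset.mem_insert.mp hk with rfl | hk2
      · exact hHP w1 hw1H (he ▸ getVert_mem_pSet p (by omega))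
      · rw [Finset.mem_Icc] at hk2
        exact hHP w1 hw1H (he ▸ getVert_mem_pSet p (by omega))
    have himgcard : ((insert 0 (Finset.Icc 2 (b-1))).image p.getVert).card = b - 1 := by
      rw [Finset.card_image_of_injOn, Finset.card_insert_of_notMem (by simp), Nat.card_Icc]
      · omega
      · intro k1 h1 k2 h2 he
        simp only [Finset.coe_insert, Set.mem_insert_iff, Finset.coe_Icc, Set.mem_Icc] at h1 h2
        refine inj k1 ?_ k2 ?_ he
        · rcases h1 with rfl | ⟨_, h⟩ <;> omega
        · rcases h2 with rfl | ⟨_, h⟩ <;> omega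
    have := Finset.card_le_card hsub
    rw [Finset.card_insert_of_notMem hw1img, himgcard] at this
    rw [SimpleGraph.degree]
    omega

/-- Good case: attachments only at the two endpoints gives the two-cliques decomposition. -/
lemma good_case [DecidableRel G.Adj] (hxy : x ≠ y)
    (h2 : ∀ s : Set V, s.ncard < 2 → (G.induce sᶜ).Connected)
    (hp : p.IsPath ∧ ∀ q : G.Walk x y, q.IsPath → q.length ≤ p.length)
    (halpha : ∀ A : Set V, x ∉ A → y ∉ A → IsIndepSet G A → A.ncard ≤ 2)
    {v : V} (hv : v ∉ pSet p)
    (hS : attachI G p (comp G (pSet p) v) = {0, p.length}) :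
    ∃ A B : Set V, A ∪ B = ({x, y} : Set V)ᶜ ∧ Disjoint A B ∧
      A.Nonempty ∧ B.Nonempty ∧ G.IsClique A ∧ G.IsClique B ∧
      ∀ a ∈ A, ∀ b ∈ B, ¬ G.Adj a b := by
  classical
  set L := p.length with hLdef
  set B := comp G (pSet p) v with hB
  have hvB : v ∈ B := comp_self hv
  have inj := getVert_injOn (G := G) hp.1
  have hgl : p.getVert L = y := by rw [hLdef]; exact Walk.getVert_length p
  have hL1 : 1 ≤ L := by
    by_contra h
    have h0 : (0 : ℕ) = L := by omega
    have h1 : p.getVert 0 = y := by rw [h0]; exact hgl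
    rw [Walk.getVert_zero] at h1
    exact hxy h1
  have hBP : ∀ u ∈ B, u ∉ pSet p := fun u hu => comp_not_mem hu
  have hnotS : ∀ {k : ℕ}, k ≤ L → k ≠ 0 → k ≠ L → ∀ h ∈ B, ¬ G.Adj h (p.getVert k) := by
    intro k hkL hk0 hkLne h hh hadj
    have : k ∈ attachI G p B := ⟨hkL, h, hh, hadj⟩
    rw [hS] at this
    simp only [Set.mem_insert_iff, Set.mem_singleton_iff] at this
    omega
  have hL2 : 2 ≤ L := by
    rcases eq_or_lt_of_le hL1 with h | h
    · exfalso
      refine no_consec_attach hp hv (i := 0) ?_ ?_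
      · rw [hS]; simp
      · rw [hS, ← h]; simp
    · omega
  have hxg : ∀ k, k ≤ L → k ≠ 0 → x ≠ p.getVert k := by
    intro k hk hk0 h
    have := inj 0 (by omega) k hk (by rw [Walk.getVert_zero]; exact h)
    omega
  have hyg : ∀ k, k ≤ L → k ≠ L → y ≠ p.getVert k := by
    intro k hk hkL h
    have := inj L le_rfl k hk (by rw [hgl]; exact h)
    omega
  -- every vertex off the path is in B
  have huniq : ∀ t, t ∉ pSet p → t ∈ B := by
    intro t htP
    by_contra htB
    obtain ⟨a', b', ha1, hb1, hbL, hab2, hS'⟩ := struct_attach hxy h2 hp halpha htP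
    set H' := comp G (pSet p) t with hH'
    have htH' : t ∈ H' := comp_self htP
    have hH'P : ∀ u ∈ H', u ∉ pSet p := fun u hu => comp_not_mem hu
    have hBH' : ∀ u, u ∈ B → u ∈ H' → False := by
      intro u huB huH'
      exact htB (comp_trans huB (comp_symm_trans huH' (comp_self htP)))
    have hnotS' : ∀ {k : ℕ}, k ≤ L → k ≠ a' → k ≠ b' → ∀ h ∈ H', ¬ G.Adj h (p.getVert k) := by
      intro k hkL hk0 hkLne h hh hadj
      have : k ∈ attachI G p H' := ⟨hkL, h, hh, hadj⟩
      rw [hS'] at this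
      simp only [Set.mem_insert_iff, Set.mem_singleton_iff] at this
      omega
    -- choose a gap index k
    obtain ⟨k, hk1, hkL1, hka, hkb⟩ : ∃ k, 1 ≤ k ∧ k ≤ L - 1 ∧ k ≠ a' ∧ k ≠ b' := by
      by_cases h : a' = 1
      · exact ⟨2, by omega, by omega, by omega, by omega⟩
      · exact ⟨1, le_rfl, by omega, fun hc => h hc.symm, by omega⟩
    have hvt : v ≠ t := fun h => htB (h ▸ hvB)
    refine indep3 halpha (u1 := v) (u2 := t) (u3 := p.getVert k) hvt
      (fun he => hv (he ▸ getVert_mem_pSet p (by omega)))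
      (fun he => htP (he ▸ getVert_mem_pSet p (by omega)))
      (fun hadj => htB (comp_closure hvB hadj htP))
      (hnotS (by omega) (by omega) (by omega) v hvB)
      (hnotS' (by omega) hka hkb t htH')
      (fun he => hv (he.symm ▸ p.start_mem_support))
      (fun he => htP (he.symm ▸ p.start_mem_support))
      (hxg k (by omega) (by omega))
      (fun he => hv (he.symm ▸ p.end_mem_support))
      (fun he => htP (he.symm ▸ p.end_mem_support))
      (hyg k (by omega) (by omega))
  refine ⟨{t | ∃ k, 1 ≤ k ∧ k ≤ L - 1 ∧ p.getVert k = t}, B, ?_, ?_, ?_, ?_, ?_, ?_, ?_⟩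
  · ext t
    simp only [Set.mem_union, Set.mem_setOf_eq, Set.mem_compl_iff, Set.mem_insert_iff,
      Set.mem_singleton_iff]
    constructor
    · rintro (⟨k, hk1, hkL, rfl⟩ | htB)
      · push_neg
        exact ⟨fun h => (hxg k (by omega) (by omega)) h.symm,
          fun h => (hyg k (by omega) (by omega)) h.symm⟩
      · push_neg
        exact ⟨fun h => hBP t htB (h ▸ p.start_mem_support),
          fun h => hBP t htB (h ▸ p.end_mem_support)⟩
    · intro ht
      push_neg at ht
      by_cases htP : t ∈ pSet p
      · obtain ⟨k, hk, hkle⟩ := Walk.mem_support_iff_exists_getVert.mp htP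
        left
        refine ⟨k, ?_, ?_, hk⟩
        · rcases Nat.eq_zero_or_pos k with rfl | h
          · exfalso
            rw [Walk.getVert_zero] at hk
            exact ht.1 hk.symm
          · omega
        · by_contra h
          have hkL : k = L := by omega
          exact ht.2 (by rw [← hk, hkL]; exact hgl)
      · exact Or.inr (huniq t htP)
  · rw [Set.disjoint_left]
    rintro t ⟨k, hk1, hkL, rfl⟩ htB
    exact hBP _ htB (getVert_mem_pSet p (by omega))
  · exact ⟨p.getVert 1, 1, le_rfl, by omega, rfl⟩
  · exact ⟨v, hvB⟩
  · rw [SimpleGraph.isClique_iff]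
    rintro t1 ⟨k1, hk11, hk1L, rfl⟩ t2 ⟨k2, hk21, hk2L, rfl⟩ hne
    have hk12 : k1 ≠ k2 := fun h => hne (h ▸ rfl)
    by_contra hadj
    exact indep3 halpha (u1 := v) (u2 := p.getVert k1) (u3 := p.getVert k2)
      (fun he => hv (he ▸ getVert_mem_pSet p (by omega)))
      (fun he => hv (he ▸ getVert_mem_pSet p (by omega)))
      hne
      (hnotS (by omega) (by omega) (by omega) v hvB)
      (hnotS (by omega) (by omega) (by omega) v hvB)
      hadj
      (fun he => hv (he.symm ▸ p.start_mem_support))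
      (hxg k1 (by omega) (by omega))
      (hxg k2 (by omega) (by omega))
      (fun he => hv (he.symm ▸ p.end_mem_support))
      (hyg k1 (by omega) (by omega))
      (hyg k2 (by omega) (by omega))
  · rw [SimpleGraph.isClique_iff]
    intro h1 hh1 h2' hh2 hne
    by_contra hadj
    exact indep3 halpha (u1 := h1) (u2 := h2') (u3 := p.getVert 1) hne
      (fun he => hBP h1 hh1 (he ▸ getVert_mem_pSet p (by omega)))
      (fun he => hBP h2' hh2 (he ▸ getVert_mem_pSet p (by omega)))
      hadj
      (hnotS (by omega) (by omega) (by omega) h1 hh1)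
      (hnotS (by omega) (by omega) (by omega) h2' hh2)
      (fun he => hBP h1 hh1 (he.symm ▸ p.start_mem_support))
      (fun he => hBP h2' hh2 (he.symm ▸ p.start_mem_support))
      (hxg 1 (by omega) (by omega))
      (fun he => hBP h1 hh1 (he.symm ▸ p.end_mem_support))
      (fun he => hBP h2' hh2 (he.symm ▸ p.end_mem_support))
      (hyg 1 (by omega) (by omega))
  · rintro t ⟨k, hk1, hkL, rfl⟩ b hb hadj
    exact hnotS (by omega) (by omega) (by omega) b hb hadj.symm

end Main

/-- if `G` is 2-connected, `x ≠ y`, and `α(G - {x,y}) ≤ 2`, then every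
`xy`-fiber contains every vertex of maximum degree, or `G - {x,y}` is the disjoint union of
two complete graphs. -/
theorem stmt15 [Fintype V] (G : SimpleGraph V) [DecidableRel G.Adj] (x y : V) (hxy : x ≠ y)
    (h2 : IsKConnected 2 G)
    (halpha : ∀ A : Set V, x ∉ A → y ∉ A → IsIndepSet G A → A.ncard ≤ 2) :
    (∀ (p : G.Walk x y), IsFiberBetween G p →
      ∀ v, G.degree v = G.maxDegree → v ∈ p.support) ∨
    (∃ A B : Set V, A ∪ B = ({x, y} : Set V)ᶜ ∧ Disjoint A B ∧
      A.Nonempty ∧ B.Nonempty ∧ G.IsClique A ∧ G.IsClique B ∧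
      ∀ a ∈ A, ∀ b ∈ B, ¬ G.Adj a b) := by
  by_cases hleft : ∀ (p : G.Walk x y), IsFiberBetween G p →
      ∀ v, G.degree v = G.maxDegree → v ∈ p.support
  · exact Or.inl hleft
  right
  push_neg at hleft
  obtain ⟨p, hfib, v, hdeg, hvp⟩ := hleft
  have hp : p.IsPath ∧ ∀ q : G.Walk x y, q.IsPath → q.length ≤ p.length := hfib
  have h2conn : ∀ s : Set V, s.ncard < 2 → (G.induce sᶜ).Connected := h2.2
  have hv : v ∉ pSet p := hvp
  obtain ⟨a, b, ha1, hb1, hbL, hab2, hS⟩ := struct_attach hxy h2conn hp halpha hv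
  by_cases hA : a = 1
  · rw [hA] at hS
    exact (internal_contra hxy h2conn hp halpha hv hdeg (b := b) (by omega) hbL hS).elim
  have ha0 : a = 0 := by omega
  by_cases hBc : b = p.length
  · rw [ha0, hBc] at hS
    exact good_case hxy h2conn hp halpha hv hS
  · have hbeq : b = p.length - 1 := by omega
    have hL3 : 3 ≤ p.length := by omega
    exfalso
    have hcomp : comp G (pSet p.reverse) v = comp G (pSet p) v := by rw [pSet_reverse]
    refine internal_contra (p := p.reverse) (x := y) (y := x) hxy.symm h2conn
      (fiber_reverse hp) (fun A hA1 hA2 => halpha A hA2 hA1) (z := v)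
      (by rw [pSet_reverse]; exact hv) hdeg
      (b := p.length) hL3 (by rw [Walk.length_reverse]) ?_
    rw [hcomp]
    ext i
    simp only [Set.mem_insert_iff, Set.mem_singleton_iff]
    constructor
    · intro hi
      have hile : i ≤ p.length := by
        have := hi.1
        rwa [Walk.length_reverse] at this
      rw [attachI_reverse hile, hS] at hi
      simp only [Set.mem_insert_iff, Set.mem_singleton_iff] at hi
      omega
    · rintro (rfl | rfl)
      · rw [attachI_reverse (by omega), hS]
        simp only [Set.mem_insert_iff, Set.mem_singleton_iff]
        omega
      · rw [attachI_reverse le_rfl, hS]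
        simp only [Set.mem_insert_iff, Set.mem_singleton_iff]
        omega


end GallaiFormal
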